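/- Fix an integer r ≥ 1, let Z be an r×r integer matrix indexed by ZMod r with trace(S^i · Z) = 0 for all i ∈ ZMod r, and let y : ZMod r → ℤ. Define the matrix Y by Y i j = ( Σ_{k=1}^{j.val} Z (i − j − 1 + k) k ) + y (i − j), where k runs over the natural numbers 1, …, j.val cast into ZMod r and all index arithmetic is performed in ZMod r. Then S·Y − Y·S = Z and Y i 0 = y i for all i ∈ ZMod r; that is, Y is the unique solution with prescribed first column y. -/

import Mathlib

def Smat (r : ℕ) (t : ZMod r) : Matrix (ZMod r) (ZMod r) ℤ :=
  Matrix.of fun i j => if i = j - t then 1 else 0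

theorem stmt_10 (r : ℕ) [NeZero r] (Z : Matrix (ZMod r) (ZMod r) ℤ)
    (hZ : ∀ i : ZMod r, Matrix.trace (Smat r i * Z) = 0) (y : ZMod r → ℤ)
    (Y : Matrix (ZMod r) (ZMod r) ℤ)
    (hYdef : ∀ i j : ZMod r,
      Y i j = (∑ k ∈ Finset.Icc 1 j.val, Z (i - j - 1 + (k : ZMod r)) ((k : ZMod r)))
        + y (i - j)) :
    Smat r 1 * Y - Y * Smat r 1 = Z ∧ ∀ i : ZMod r, Y i 0 = y i := by
  have hY0 : ∀ i : ZMod r, Y i 0 = y i := by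
    intro i
    simp [hYdef i 0, ZMod.val_zero]
  refine ⟨?_, hY0⟩
  obtain ⟨m, rfl⟩ : ∃ m, r = m + 1 := ⟨r - 1, (Nat.succ_pred_eq_of_ne_zero (NeZero.ne r)).symm⟩
  ext i j
  have hL : (Smat (m+1) 1 * Y) i j = Y (i + 1) j := by
    simp [Smat, Matrix.mul_apply, eq_sub_iff_add_eq, eq_comm]
  have hR : (Y * Smat (m+1) 1) i j = Y i (j - 1) := by
    simp [Smat, Matrix.mul_apply]
  rw [Matrix.sub_apply, hL, hR]
  by_cases hj : j = 0
  · subst hj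
    have hv : (0 - 1 : ZMod (m+1)).val = m := by
      rw [zero_sub]; exact ZMod.val_neg_one m
    rw [hYdef, hYdef, hv]
    simp only [ZMod.val_zero, Finset.Icc_eq_empty_of_lt Nat.zero_lt_one, Finset.sum_empty,
      zero_add, sub_zero, sub_sub_cancel]
    have htr : (∑ k ∈ Finset.range (m+1), Z (i + (k : ZMod (m+1))) (k : ZMod (m+1))) = 0 := by
      have := hZ i
      have htrace : Matrix.trace (Smat (m+1) i * Z) =
          ∑ j : ZMod (m+1), Z (j + i) j := by
        simp [Matrix.trace, Matrix.mul_apply, Smat, Matrix.diag, eq_sub_iff_add_eq, eq_comm]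
      rw [htrace] at this
      rw [← this]
      refine Finset.sum_nbij' (i := fun k : ℕ => (k : ZMod (m+1)))
        (j := fun j : ZMod (m+1) => j.val) ?_ ?_ ?_ ?_ ?_ <;>
        simp +contextual [ZMod.val_lt, ZMod.val_cast_of_lt, Finset.mem_range,
          Nat.mod_eq_of_lt, add_comm, fun a : ZMod (m+1) => Nat.lt_succ_iff.mp (ZMod.val_lt a)]
    rw [Finset.sum_range_succ'] at htr
    have hIcc : (∑ k ∈ Finset.Icc 1 m, Z (i - (0-1) - 1 + (k : ZMod (m+1))) (k : ZMod (m+1)))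
        = ∑ k ∈ Finset.range m, Z (i + ((k+1 : ℕ) : ZMod (m+1))) ((k+1 : ℕ) : ZMod (m+1)) := by
      rw [← Finset.Ico_add_one_right_eq_Icc, Finset.sum_Ico_eq_sum_range]
      refine Finset.sum_congr (by congr 1) fun k _ => ?_
      congr 1 <;> push_cast <;> ring
    rw [hIcc]
    have hy2 : i - (0 - 1) = i + 1 := by ring
    rw [hy2]
    simp only [Nat.cast_zero, add_zero] at htr
    linarith [htr]
  · have hval : 1 ≤ j.val :=
      Nat.one_le_iff_ne_zero.mpr fun h => hj ((ZMod.val_eq_zero j).mp h)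
    have hjv : (j - 1).val = j.val - 1 := by
      have h1 : (j - 1) = ((j.val - 1 : ℕ) : ZMod (m+1)) := by
        rw [Nat.cast_sub hval, Nat.cast_one, ZMod.natCast_zmod_val]
      rw [h1, ZMod.val_cast_of_lt]
      have := ZMod.val_lt j
      omega
    rw [hYdef, hYdef, hjv]
    have hy : i + 1 - j = i - (j - 1) := by ring
    rw [hy]
    have hsplit : (∑ k ∈ Finset.Icc 1 j.val,
          Z (i - (j-1) - 1 + (k : ZMod (m+1))) (k : ZMod (m+1)))
        = (∑ k ∈ Finset.Icc 1 (j.val - 1), Z (i - (j-1) - 1 + (k : ZMod (m+1))) (k : ZMod (m+1)))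
          + Z (i - (j-1) - 1 + ((j.val : ℕ) : ZMod (m+1))) ((j.val : ℕ) : ZMod (m+1)) := by
      have h2 : j.val = (j.val - 1) + 1 := by omega
      rw [h2, Finset.sum_Icc_succ_top (by omega)]
      rw [← h2]
    rw [hsplit, ZMod.natCast_zmod_val]
    have h3 : i - (j - 1) - 1 + j = i := by ring
    rw [h3]
    ring
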